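/- arXiv:1603.00804 — 3 statements merged into one kernel-verified Lean document; each statement's English description precedes it below -/
import Mathlib

section
/- Let (W,W') be an exchangeable pair of real random variables in L⁴(P) (i.e. (W,W') and (W',W) have the same joint distribution) and let 𝓖 be a sub-σ-field of 𝓕 with σ(W) ⊆ 𝓖, such that E[W' − W | 𝓖] = −λW for some λ > 0. Then (1/(4λ))·E[(W' − W)⁴] = 3·E[ W² · (1/(2λ))·E[(W' − W)² | 𝓖] ] − E[W⁴]. -/
open MeasureTheory ProbabilityTheory Finset Filter
open scoped ENNReal

private lemma mono4_aux (x y : ℝ) (a b : ℕ) (hab : a + b = 4) :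
    |x| ^ a * |y| ^ b ≤ (|x| + |y|) ^ 4 := by
  calc |x| ^ a * |y| ^ b ≤ (|x| + |y|) ^ a * (|x| + |y|) ^ b := by
        have hx : |x| ≤ |x| + |y| := le_add_of_nonneg_right (abs_nonneg y)
        have hy : |y| ≤ |x| + |y| := le_add_of_nonneg_left (abs_nonneg x)
        gcongr
    _ = (|x| + |y|) ^ 4 := by rw [← pow_add, hab]

private lemma pow4_integrable {Ω : Type*} {m : MeasurableSpace Ω} {μ : Measure Ω} {f : Ω → ℝ}
    (hf : MemLp f 4 μ) : Integrable (fun ω => f ω ^ 4) μ := by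
  have h := hf.integrable_norm_rpow (by norm_num) (by norm_num)
  refine h.congr (Filter.Eventually.of_forall fun x => ?_)
  simp only [Real.norm_eq_abs]
  rw [show ((4 : ℝ≥0∞).toReal) = ((4 : ℕ) : ℝ) by norm_num, Real.rpow_natCast, pow_abs,
    abs_of_nonneg (by positivity)]

private lemma exch_moment {Ω : Type*} {m : MeasurableSpace Ω} {μ : Measure Ω} {W W' : Ω → ℝ}
    (hW : AEMeasurable W μ) (hW' : AEMeasurable W' μ)
    (hexch : Measure.map (fun ω => (W ω, W' ω)) μ = Measure.map (fun ω => (W' ω, W ω)) μ)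
    (a b : ℕ) :
    ∫ ω, W ω ^ a * W' ω ^ b ∂μ = ∫ ω, W' ω ^ a * W ω ^ b ∂μ := by
  have hfc : Continuous (fun p : ℝ × ℝ => p.1 ^ a * p.2 ^ b) :=
    (continuous_fst.pow a).mul (continuous_snd.pow b)
  have h1 := integral_map (μ := μ) (φ := fun ω => (W ω, W' ω)) (hW.prodMk hW')
    (f := fun p : ℝ × ℝ => p.1 ^ a * p.2 ^ b) hfc.aestronglyMeasurable
  have h2 := integral_map (μ := μ) (φ := fun ω => (W' ω, W ω)) (hW'.prodMk hW)
    (f := fun p : ℝ × ℝ => p.1 ^ a * p.2 ^ b) hfc.aestronglyMeasurable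
  rw [hexch] at h1
  simpa using h1.symm.trans h2

theorem exchangeable_pair_fourth_moment_identity
    {Ω : Type*} [m0 : MeasurableSpace Ω] (μ : Measure Ω) [IsProbabilityMeasure μ]
    (W W' : Ω → ℝ) (hW4 : MemLp W 4 μ) (hW'4 : MemLp W' 4 μ)
    (hexch : Measure.map (fun ω => (W ω, W' ω)) μ = Measure.map (fun ω => (W' ω, W ω)) μ)
    (𝓖 : MeasurableSpace Ω) (h𝓖 : 𝓖 ≤ m0)
    (hW𝓖 : MeasurableSpace.comap W inferInstance ≤ 𝓖)
    (lam : ℝ) (hlam : 0 < lam)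
    (hreg : μ[(fun ω => W' ω - W ω) | 𝓖] =ᵐ[μ] fun ω => -lam * W ω) :
    1 / (4 * lam) * ∫ ω, (W' ω - W ω) ^ 4 ∂μ =
      3 * (∫ ω, (W ω) ^ 2 *
            (1 / (2 * lam) * ((μ[(fun ω' => (W' ω' - W ω') ^ 2) | 𝓖]) ω)) ∂μ) -
        ∫ ω, (W ω) ^ 4 ∂μ := by
  have hWm : AEMeasurable W μ := hW4.aestronglyMeasurable.aemeasurable
  have hW'm : AEMeasurable W' μ := hW'4.aestronglyMeasurable.aemeasurable
  -- dominating function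
  have hS : MemLp (fun ω => |W ω| + |W' ω|) 4 μ := by
    have := hW4.norm.add hW'4.norm
    simpa [Real.norm_eq_abs, Pi.add_def] using this
  have hS4 : Integrable (fun ω => (|W ω| + |W' ω|) ^ 4) μ := pow4_integrable hS
  have dom : ∀ f : Ω → ℝ, AEStronglyMeasurable[m0] f μ →
      (∀ ω, |f ω| ≤ (|W ω| + |W' ω|) ^ 4) → Integrable f μ := fun f hfm hbd =>
    hS4.mono' hfm (Filter.Eventually.of_forall fun ω => by
      simpa [Real.norm_eq_abs] using hbd ω)
  -- integrability facts
  have i40 : Integrable (fun ω => W ω ^ 4) μ := pow4_integrable hW4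
  have i04 : Integrable (fun ω => W' ω ^ 4) μ := pow4_integrable hW'4
  have i31 : Integrable (fun ω => W ω ^ 3 * W' ω) μ := by
    refine dom _ (((hWm.pow_const 3).mul hW'm).aestronglyMeasurable) fun ω => ?_
    calc |W ω ^ 3 * W' ω| = |W ω| ^ 3 * |W' ω| ^ 1 := by
          rw [abs_mul, abs_pow, pow_one]
      _ ≤ _ := mono4_aux _ _ 3 1 rfl
  have i13 : Integrable (fun ω => W' ω ^ 3 * W ω) μ := by
    refine dom _ (((hW'm.pow_const 3).mul hWm).aestronglyMeasurable) fun ω => ?_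
    calc |W' ω ^ 3 * W ω| = |W ω| ^ 1 * |W' ω| ^ 3 := by
          rw [abs_mul, abs_pow, pow_one]; ring
      _ ≤ _ := mono4_aux _ _ 1 3 rfl
  have i22 : Integrable (fun ω => W ω ^ 2 * W' ω ^ 2) μ := by
    refine dom _ (((hWm.pow_const 2).mul (hW'm.pow_const 2)).aestronglyMeasurable) fun ω => ?_
    calc |W ω ^ 2 * W' ω ^ 2| = |W ω| ^ 2 * |W' ω| ^ 2 := by
          rw [abs_mul, abs_pow, abs_pow]
      _ ≤ _ := mono4_aux _ _ 2 2 rfl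
  have hD4 : MemLp (fun ω => W' ω - W ω) 4 μ := hW'4.sub hW4
  have iD4 : Integrable (fun ω => (W' ω - W ω) ^ 4) μ := pow4_integrable hD4
  have iD : Integrable (fun ω => W' ω - W ω) μ := hD4.integrable (by norm_num)
  have iD2 : Integrable (fun ω => (W' ω - W ω) ^ 2) μ :=
    (hD4.mono_exponent (by norm_num)).integrable_sq
  have habsD : ∀ ω, |W' ω - W ω| ≤ |W ω| + |W' ω| := fun ω => by
    have := abs_sub (W' ω) (W ω); linarith [this]
  have iW3D : Integrable (fun ω => W ω ^ 3 * (W' ω - W ω)) μ := by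
    refine dom _ (((hWm.pow_const 3).mul (hW'm.sub hWm)).aestronglyMeasurable) fun ω => ?_
    calc |W ω ^ 3 * (W' ω - W ω)| = |W ω| ^ 3 * |W' ω - W ω| := by rw [abs_mul, abs_pow]
      _ ≤ (|W ω| + |W' ω|) ^ 3 * (|W ω| + |W' ω|) := by
          gcongr <;> first
            | positivity
            | exact habsD ω
            | exact le_add_of_nonneg_right (abs_nonneg _)
      _ = (|W ω| + |W' ω|) ^ 4 := by ring
  have iW2D2 : Integrable (fun ω => W ω ^ 2 * (W' ω - W ω) ^ 2) μ := by
    refine dom _ (((hWm.pow_const 2).mul ((hW'm.sub hWm).pow_const 2)).aestronglyMeasurable)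
      fun ω => ?_
    calc |W ω ^ 2 * (W' ω - W ω) ^ 2| = |W ω| ^ 2 * |W' ω - W ω| ^ 2 := by
          rw [abs_mul, abs_pow, abs_pow]
      _ ≤ (|W ω| + |W' ω|) ^ 2 * (|W ω| + |W' ω|) ^ 2 := by
          gcongr <;> first
            | positivity
            | exact habsD ω
            | exact le_add_of_nonneg_right (abs_nonneg _)
      _ = (|W ω| + |W' ω|) ^ 4 := by ring
  -- 𝓖-measurability
  have hWG : Measurable[𝓖] W := fun s hs => hW𝓖 _ ⟨s, hs, rfl⟩
  have hW3G : StronglyMeasurable[𝓖] (fun ω => W ω ^ 3) := (hWG.pow_const 3).stronglyMeasurable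
  have hW2G : StronglyMeasurable[𝓖] (fun ω => W ω ^ 2) := (hWG.pow_const 2).stronglyMeasurable
  -- key 1 : ∫ W^3 (W'-W) = -lam ∫ W^4
  have key1 : ∫ ω, W ω ^ 3 * (W' ω - W ω) ∂μ = -lam * ∫ ω, W ω ^ 4 ∂μ := by
    have hpull := condExp_mul_of_stronglyMeasurable_left (μ := μ) hW3G
      (g := fun ω => W' ω - W ω) iW3D iD
    calc ∫ ω, W ω ^ 3 * (W' ω - W ω) ∂μ
        = ∫ ω, (μ[(fun ω => W ω ^ 3) * (fun ω => W' ω - W ω)|𝓖]) ω ∂μ :=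
          (integral_condExp h𝓖 (f := (fun ω => W ω ^ 3) * (fun ω => W' ω - W ω))).symm
      _ = ∫ ω, W ω ^ 3 * (μ[(fun ω => W' ω - W ω)|𝓖]) ω ∂μ := integral_congr_ae hpull
      _ = ∫ ω, W ω ^ 3 * (-lam * W ω) ∂μ := by
          refine integral_congr_ae ?_
          filter_upwards [hreg] with ω hω
          rw [hω]
      _ = ∫ ω, -lam * W ω ^ 4 ∂μ := by
          refine integral_congr_ae (Filter.Eventually.of_forall fun ω => ?_); ring
      _ = -lam * ∫ ω, W ω ^ 4 ∂μ := integral_const_mul _ _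
  -- key 2 : ∫ W^2 E[D^2|𝓖] = ∫ W^2 D^2
  have key2 : ∫ ω, W ω ^ 2 * (μ[(fun ω' => (W' ω' - W ω') ^ 2)|𝓖]) ω ∂μ
      = ∫ ω, W ω ^ 2 * (W' ω - W ω) ^ 2 ∂μ := by
    have hpull := condExp_mul_of_stronglyMeasurable_left (μ := μ) hW2G
      (g := fun ω => (W' ω - W ω) ^ 2) iW2D2 iD2
    calc ∫ ω, W ω ^ 2 * (μ[(fun ω' => (W' ω' - W ω') ^ 2)|𝓖]) ω ∂μ
        = ∫ ω, (μ[(fun ω => W ω ^ 2) * (fun ω' => (W' ω' - W ω') ^ 2)|𝓖]) ω ∂μ :=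
          (integral_congr_ae hpull).symm
      _ = ∫ ω, W ω ^ 2 * (W' ω - W ω) ^ 2 ∂μ := integral_condExp h𝓖 (f := (fun ω => W ω ^ 2) * (fun ω' => (W' ω' - W ω') ^ 2))
  -- exchangeability moments
  have ex13 : ∫ ω, W' ω ^ 3 * W ω ∂μ = ∫ ω, W ω ^ 3 * W' ω ∂μ := by
    have := exch_moment hW'm hWm hexch.symm 3 1
    simpa using this
  have ex04 : ∫ ω, W' ω ^ 4 ∂μ = ∫ ω, W ω ^ 4 ∂μ := by
    have := exch_moment hW'm hWm hexch.symm 4 0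
    simpa using this
  have ex22 : ∫ ω, W' ω ^ 2 * W ω ^ 2 ∂μ = ∫ ω, W ω ^ 2 * W' ω ^ 2 ∂μ := by
    refine integral_congr_ae (Filter.Eventually.of_forall fun ω => ?_); ring
  -- abbreviations
  set M : ℝ := ∫ ω, W ω ^ 4 ∂μ with hM
  set A : ℝ := ∫ ω, W ω ^ 3 * W' ω ∂μ with hA
  set B : ℝ := ∫ ω, W ω ^ 2 * W' ω ^ 2 ∂μ with hB
  -- expansion of ∫ D^4
  have eD4 : ∫ ω, (W' ω - W ω) ^ 4 ∂μ = 2 * M - 8 * A + 6 * B := by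
    have hrw : (fun ω => (W' ω - W ω) ^ 4)
        = fun ω => (((W' ω ^ 4 - 4 * (W' ω ^ 3 * W ω)) + 6 * (W ω ^ 2 * W' ω ^ 2))
            - 4 * (W ω ^ 3 * W' ω)) + W ω ^ 4 := funext fun ω => by ring
    have I1 : Integrable (fun ω => W' ω ^ 4 - 4 * (W' ω ^ 3 * W ω)) μ :=
      i04.sub (i13.const_mul 4)
    have I2 : Integrable (fun ω => W' ω ^ 4 - 4 * (W' ω ^ 3 * W ω)
        + 6 * (W ω ^ 2 * W' ω ^ 2)) μ := I1.add (i22.const_mul 6)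
    have I3 : Integrable (fun ω => W' ω ^ 4 - 4 * (W' ω ^ 3 * W ω)
        + 6 * (W ω ^ 2 * W' ω ^ 2) - 4 * (W ω ^ 3 * W' ω)) μ := I2.sub (i31.const_mul 4)
    rw [hrw, integral_add I3 i40, integral_sub I2 (i31.const_mul 4),
      integral_add I1 (i22.const_mul 6), integral_sub i04 (i13.const_mul 4),
      integral_const_mul, integral_const_mul, integral_const_mul, ex04, ex13]
    ring
  -- expansion of ∫ W^2 D^2
  have eW2D2 : ∫ ω, W ω ^ 2 * (W' ω - W ω) ^ 2 ∂μ = B - 2 * A + M := by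
    have hrw : (fun ω => W ω ^ 2 * (W' ω - W ω) ^ 2)
        = fun ω => ((W ω ^ 2 * W' ω ^ 2) - 2 * (W ω ^ 3 * W' ω)) + W ω ^ 4 :=
      funext fun ω => by ring
    have J1 : Integrable (fun ω => W ω ^ 2 * W' ω ^ 2 - 2 * (W ω ^ 3 * W' ω)) μ :=
      i22.sub (i31.const_mul 2)
    rw [hrw, integral_add J1 i40, integral_sub i22 (i31.const_mul 2), integral_const_mul]
  -- expansion of ∫ W^3 D
  have eW3D : ∫ ω, W ω ^ 3 * (W' ω - W ω) ∂μ = A - M := by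
    have hrw : (fun ω => W ω ^ 3 * (W' ω - W ω))
        = fun ω => (W ω ^ 3 * W' ω) - W ω ^ 4 := funext fun ω => by ring
    rw [hrw, integral_sub i31 i40]
  have hAval : A = M - lam * M := by
    rw [eW3D] at key1; linarith
  -- middle term
  have hmid : ∫ ω, (W ω) ^ 2 * (1 / (2 * lam) * ((μ[(fun ω' => (W' ω' - W ω') ^ 2) | 𝓖]) ω)) ∂μ
      = 1 / (2 * lam) * (B - 2 * A + M) := by
    have hrw : (fun ω => (W ω) ^ 2 * (1 / (2 * lam) * ((μ[(fun ω' => (W' ω' - W ω') ^ 2) | 𝓖]) ω)))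
        = fun ω => 1 / (2 * lam) * (W ω ^ 2 * ((μ[(fun ω' => (W' ω' - W ω') ^ 2) | 𝓖]) ω)) :=
      funext fun ω => by ring
    rw [hrw, integral_const_mul, key2, eW2D2]
  rw [eD4, hmid, hAval]
  have hl : lam ≠ 0 := ne_of_gt hlam
  field_simp
  ring
end

section
/- Let W = f(X_1,…,X_n) ∈ L²(P) be a degenerate U-statistic of order d. Let Y = (Y_1,…,Y_n) be an independent copy of X = (X_1,…,X_n) and α uniformly distributed on [n], with X, Y, α jointly independent; set X'_j := Y_j if α = j and X'_j := X_j otherwise, and W' := f(X'_1,…,X'_n). Then E[W' − W | σ(X_1,…,X_n)] = −(d/n)·W, and in particular E[W' − W | W] = −(d/n)·W. -/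
open MeasureTheory ProbabilityTheory Finset Filter

noncomputable section

/-- The σ-algebra generated by the random variables `X j`, `j ∈ J`. -/
def sigmaGen {Ω : Type*} {n : ℕ} {E : Fin n → Type*} [∀ i, MeasurableSpace (E i)]
    (X : ∀ i, Ω → E i) (J : Finset (Fin n)) : MeasurableSpace Ω :=
  ⨆ i ∈ J, MeasurableSpace.comap (X i) inferInstance

/-- The Hoeffding component of `W` indexed by `J`:
`W_J = ∑_{L ⊆ J} (-1)^{|J|-|L|} E[W | 𝓕_L]`. -/
noncomputable def hoeff {Ω : Type*} [MeasurableSpace Ω] {n : ℕ} {E : Fin n → Type*}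
    [∀ i, MeasurableSpace (E i)] (μ : Measure Ω) (X : ∀ i, Ω → E i)
    (W : Ω → ℝ) (J : Finset (Fin n)) : Ω → ℝ :=
  ∑ L ∈ J.powerset, ((-1 : ℝ) ^ (J.card - L.card)) • μ[W | sigmaGen X L]

/-- The collection `𝓓_d` of all `d`-subsets of `{1,…,n}`. -/
def DD (n d : ℕ) : Finset (Finset (Fin n)) :=
  Finset.univ.filter fun J => J.card = d

/-- `W` is a degenerate U-statistic of order `d` (w.r.t. the data `X`): its Hoeffding
decomposition is `W = ∑_{J ∈ 𝓓_d} W_J`. -/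
def IsDegenUStat {Ω : Type*} [MeasurableSpace Ω] {n : ℕ} {E : Fin n → Type*}
    [∀ i, MeasurableSpace (E i)] (μ : Measure Ω) (X : ∀ i, Ω → E i)
    (W : Ω → ℝ) (d : ℕ) : Prop :=
  W =ᵐ[μ] fun ω => ∑ J ∈ DD n d, hoeff μ X W J ω

/-- The influence quantity `ρ_n² = max_{1 ≤ i ≤ n} ∑_{J ∈ 𝓓_d, i ∈ J} Var(W_J)`. -/
noncomputable def rho2 {Ω : Type*} [MeasurableSpace Ω] {n : ℕ} {E : Fin n → Type*}
    [∀ i, MeasurableSpace (E i)] (μ : Measure Ω) (X : ∀ i, Ω → E i)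
    (W : Ω → ℝ) (d : ℕ) : ℝ :=
  ⨆ i : Fin n, ∑ J ∈ (DD n d).filter (fun J => i ∈ J), variance (hoeff μ X W J) μ

/-! ### Auxiliary lemmas -/

/-- Conditional expectation onto `σ(Z)` of `φ(Z, T)` with `T ⟂ Z` is obtained by
integrating out `T`. -/
lemma condexp_indepFun_integral {Ω β γ : Type*} [m0 : MeasurableSpace Ω]
    {μ : Measure Ω} [IsProbabilityMeasure μ] [mβ : MeasurableSpace β] [mγ : MeasurableSpace γ]
    {Z : Ω → β} {T : Ω → γ} (hZ : Measurable Z) (hT : Measurable T)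
    (hind : IndepFun Z T μ) {φ : β → γ → ℝ} (hφ : Measurable (Function.uncurry φ))
    (hint : Integrable (fun ω => φ (Z ω) (T ω)) μ) :
    μ[(fun ω => φ (Z ω) (T ω)) | MeasurableSpace.comap Z mβ]
      =ᵐ[μ] fun ω => ∫ t, φ (Z ω) t ∂(μ.map T) := by
  set ρ := μ.map Z with hρ
  set κ := μ.map T with hκ
  haveI : IsProbabilityMeasure ρ := Measure.isProbabilityMeasure_map hZ.aemeasurable
  haveI : IsProbabilityMeasure κ := Measure.isProbabilityMeasure_map hT.aemeasurable
  have hpairmeas : Measurable (fun ω => (Z ω, T ω)) := hZ.prodMk hT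
  have hprod : μ.map (fun ω => (Z ω, T ω)) = ρ.prod κ :=
    (indepFun_iff_map_prod_eq_prod_map_map hZ.aemeasurable hT.aemeasurable).mp hind
  have hφint : Integrable (Function.uncurry φ) (ρ.prod κ) := by
    rw [← hprod]
    exact (integrable_map_measure hφ.aestronglyMeasurable hpairmeas.aemeasurable).mpr hint
  set g : β → ℝ := fun z => ∫ t, φ z t ∂κ with hgdef
  have hgsm : StronglyMeasurable g := hφ.stronglyMeasurable.integral_prod_right'
  have hgint : Integrable g ρ := hφint.integral_prod_left
  have hgZint : Integrable (fun ω => g (Z ω)) μ :=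
    (integrable_map_measure hgsm.aestronglyMeasurable hZ.aemeasurable).mp hgint
  have hle : MeasurableSpace.comap Z mβ ≤ m0 := hZ.comap_le
  refine (ae_eq_condExp_of_forall_setIntegral_eq hle hint
    (fun s hs _ => ?_) (fun s hs _ => ?_) ?_).symm
  · exact hgZint.integrableOn
  · obtain ⟨u, hu, rfl⟩ := hs
    have h1 : ∫ ω in Z ⁻¹' u, g (Z ω) ∂μ = ∫ z in u, g z ∂ρ :=
      (setIntegral_map hu hgsm.aestronglyMeasurable hZ.aemeasurable).symm
    have h2 : ∫ ω in Z ⁻¹' u, φ (Z ω) (T ω) ∂μ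
        = ∫ p in u ×ˢ Set.univ, Function.uncurry φ p ∂(ρ.prod κ) := by
      rw [← hprod, setIntegral_map (hu.prod MeasurableSet.univ)
        hφ.aestronglyMeasurable hpairmeas.aemeasurable]
      rw [Set.mk_preimage_prod, Set.preimage_univ, Set.inter_univ]
      rfl
    have h3 : ∫ p in u ×ˢ Set.univ, Function.uncurry φ p ∂(ρ.prod κ)
        = ∫ z in u, ∫ t in Set.univ, φ z t ∂κ ∂ρ :=
      setIntegral_prod _ hφint.integrableOn
    rw [h1, h2, h3]
    simp only [Measure.restrict_univ]
    rfl
  · exact ((hgsm.measurable.comp (comap_measurable Z)).stronglyMeasurable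
      ).aestronglyMeasurable

/-- Pushing `pi ν ⊗ ν j` forward under updating coordinate `j` gives back `pi ν`. -/
lemma map_update_pi {n : ℕ} {E : Fin n → Type*} [∀ i, MeasurableSpace (E i)]
    (ν : ∀ i, Measure (E i)) [∀ i, IsProbabilityMeasure (ν i)] (j : Fin n) :
    Measure.map (fun p : (∀ i, E i) × E j => Function.update p.1 j p.2)
      ((Measure.pi ν).prod (ν j)) = Measure.pi ν := by
  classical
  have hu : Measurable (fun p : (∀ i, E i) × E j => Function.update p.1 j p.2) :=
    measurable_update'
  refine (Measure.pi_eq fun s hs => ?_).symm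
  rw [Measure.map_apply hu (MeasurableSet.univ_pi hs)]
  have hpre : (fun p : (∀ i, E i) × E j => Function.update p.1 j p.2) ⁻¹' Set.univ.pi s
      = (Set.univ.pi (Function.update s j Set.univ)) ×ˢ (s j) := by
    ext ⟨x, t⟩
    simp only [Set.mem_preimage, Set.mem_pi, Set.mem_univ, forall_true_left, Set.mem_prod]
    constructor
    · intro h
      refine ⟨fun k => ?_, by simpa using h j⟩
      by_cases hk : k = j
      · subst hk; simp [Function.update_self]
      · simpa [Function.update_of_ne hk] using h k
    · rintro ⟨h1, h2⟩ k
      by_cases hk : k = j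
      · subst hk; simpa [Function.update_self] using h2
      · have := h1 k
        simpa [Function.update_of_ne hk] using this
  rw [hpre, Measure.prod_prod, Measure.pi_pi]
  have hL : ∏ i, (ν i) (Function.update s j Set.univ i)
      = ∏ i ∈ Finset.univ.erase j, (ν i) (s i) := by
    rw [← Finset.prod_erase_mul Finset.univ _ (Finset.mem_univ j), Function.update_self,
      measure_univ, mul_one]
    exact Finset.prod_congr rfl fun i hi => by
      rw [Function.update_of_ne (Finset.ne_of_mem_erase hi)]
  rw [hL, Finset.prod_erase_mul _ _ (Finset.mem_univ j)]

/-- The joint law of independent random variables is the product of the laws. -/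
lemma map_eq_pi {Ω : Type*} [m0 : MeasurableSpace Ω] {μ : Measure Ω} [IsProbabilityMeasure μ]
    {n : ℕ} {E : Fin n → Type*} [∀ i, MeasurableSpace (E i)]
    {X : ∀ i, Ω → E i} (hX : ∀ i, Measurable (X i))
    (hindep : iIndepFun X μ) :
    μ.map (fun ω i => X i ω) = Measure.pi (fun i => μ.map (X i)) := by
  haveI : ∀ i, IsProbabilityMeasure (μ.map (X i)) :=
    fun i => Measure.isProbabilityMeasure_map (hX i).aemeasurable
  refine (Measure.pi_eq fun s hs => ?_).symm
  rw [Measure.map_apply (measurable_pi_lambda _ fun i => hX i) (MeasurableSet.univ_pi hs)]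
  have hpre : (fun ω i => X i ω) ⁻¹' Set.univ.pi s = ⋂ i ∈ Finset.univ, X i ⁻¹' s i := by
    ext ω; simp
  rw [hpre, hindep.measure_inter_preimage_eq_mul Finset.univ (fun i _ => hs i)]
  exact Finset.prod_congr rfl fun i _ =>
    (Measure.map_apply (hX i) (hs i)).symm

section SigmaGenLemmas

variable {Ω : Type*} {n : ℕ} {E : Fin n → Type*} [∀ i, MeasurableSpace (E i)]
  (X : ∀ i, Ω → E i)

lemma sigmaGen_eq_comap (L : Finset (Fin n)) :
    sigmaGen X L = MeasurableSpace.comap (fun ω (i : {x // x ∈ L}) => X i.1 ω)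
      MeasurableSpace.pi := by
  rw [MeasurableSpace.pi, MeasurableSpace.comap_iSup]
  simp_rw [MeasurableSpace.comap_comp]
  rw [sigmaGen, iSup_subtype']
  rfl

lemma sigmaGen_univ_eq_comap :
    sigmaGen X Finset.univ = MeasurableSpace.comap (fun ω i => X i ω)
      MeasurableSpace.pi := by
  rw [MeasurableSpace.pi, MeasurableSpace.comap_iSup]
  simp_rw [MeasurableSpace.comap_comp]
  rw [sigmaGen]
  simp only [Finset.mem_univ, iSup_pos]
  rfl

lemma sigmaGen_mono {L K : Finset (Fin n)} (h : L ⊆ K) : sigmaGen X L ≤ sigmaGen X K := by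
  refine iSup₂_le fun i hi => ?_
  exact le_iSup₂ (f := fun i (_ : i ∈ K) => MeasurableSpace.comap (X i) inferInstance) i (h hi)

lemma sigmaGen_le [m0 : MeasurableSpace Ω] (hX : ∀ i, Measurable (X i)) (L : Finset (Fin n)) :
    sigmaGen X L ≤ m0 :=
  iSup₂_le fun i _ => (hX i).comap_le

/-- A measurable function of `X` depending only on coordinates in `L` is
`sigmaGen X L`-measurable. -/
lemma measurable_sigmaGen_of_depends (x₀ : ∀ i, E i) {L : Finset (Fin n)}
    {F : (∀ i, E i) → ℝ} (hF : Measurable F)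
    (hdep : ∀ x y : ∀ i, E i, (∀ i ∈ L, x i = y i) → F x = F y) :
    Measurable[sigmaGen X L] (fun ω => F (fun i => X i ω)) := by
  rw [sigmaGen_eq_comap]
  classical
  have hfac : (fun ω => F (fun i => X i ω))
      = (fun z : ∀ i : {x // x ∈ L}, E i.1 =>
          F (fun k => if h : k ∈ L then z ⟨k, h⟩ else x₀ k)) ∘
        (fun ω (i : {x // x ∈ L}) => X i.1 ω) := by
    funext ω
    exact hdep _ _ (fun i hi => by simp [hi])
  rw [hfac]
  refine Measurable.comp ?_ (comap_measurable _)
  refine hF.comp (measurable_pi_lambda _ fun k => ?_)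
  by_cases h : k ∈ L
  · simpa [h] using measurable_pi_apply (⟨k, h⟩ : {x // x ∈ L})
  · simp only [h, dif_neg, not_false_iff]
    exact measurable_const

end SigmaGenLemmas

/-- Helper: a.e. equality of finite sums from termwise a.e. equality. -/
lemma eventuallyEq_finset_sum {Ω ι : Type*} [MeasurableSpace Ω] {μ : Measure Ω}
    (s : Finset ι) {F G : ι → Ω → ℝ} (h : ∀ i ∈ s, F i =ᵐ[μ] G i) :
    (fun ω => ∑ i ∈ s, F i ω) =ᵐ[μ] fun ω => ∑ i ∈ s, G i ω := by
  have h' := (eventually_all_finset s).mpr h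
  filter_upwards [h'] with ω hω
  exact Finset.sum_congr rfl hω

section Main

variable {Ω : Type*} [m0 : MeasurableSpace Ω] {μ : Measure Ω} [IsProbabilityMeasure μ]
  {n : ℕ} {E : Fin n → Type*} [∀ i, MeasurableSpace (E i)] {X : ∀ i, Ω → E i}

/-- The tuple of the `X i`, `i ∈ L`. -/
def Zt (X : ∀ i, Ω → E i) (L : Finset (Fin n)) : Ω → ∀ i : {x // x ∈ L}, E i.1 :=
  fun ω i => X i.1 ω

/-- Merge a tuple on `L` with a tuple on `univ \ L`. -/
def mrg (L : Finset (Fin n)) (z : ∀ i : {x // x ∈ L}, E i.1)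
    (t : ∀ i : {x // x ∈ Finset.univ \ L}, E i.1) : ∀ i, E i :=
  fun k => if h : k ∈ L then z ⟨k, h⟩
    else t ⟨k, Finset.mem_sdiff.mpr ⟨Finset.mem_univ k, h⟩⟩

lemma measurable_Zt (hX : ∀ i, Measurable (X i)) (L : Finset (Fin n)) :
    Measurable (Zt X L) :=
  measurable_pi_lambda _ fun i => hX i.1

lemma measurable_mrg (L : Finset (Fin n)) :
    Measurable (fun p : (∀ i : {x // x ∈ L}, E i.1) ×
        (∀ i : {x // x ∈ Finset.univ \ L}, E i.1) => mrg L p.1 p.2) := by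
  refine measurable_pi_lambda _ fun k => ?_
  unfold mrg
  by_cases h : k ∈ L
  · simp only [dif_pos h]
    exact (measurable_pi_apply _).comp measurable_fst
  · simp only [dif_neg h]
    exact (measurable_pi_apply _).comp measurable_snd

lemma mrg_Zt (L : Finset (Fin n)) (ω : Ω) :
    mrg L (Zt X L ω) (Zt X (Finset.univ \ L) ω) = fun i => X i ω := by
  funext k
  unfold mrg Zt
  by_cases h : k ∈ L <;> simp [h]

variable (hX : ∀ i, Measurable (X i))
  (hindep : iIndepFun X μ)
  {f : (∀ i, E i) → ℝ} (hf : Measurable f)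

include hX hindep hf

/-- Step 1: explicit representation of `E[f(X) | 𝓕_L]`. -/
lemma condexp_eq_integral_mrg
    (hWint : Integrable (fun ω => f (fun i => X i ω)) μ) (L : Finset (Fin n)) :
    μ[(fun ω => f (fun i => X i ω)) | sigmaGen X L] =ᵐ[μ]
      fun ω => ∫ t, f (mrg L (Zt X L ω) t) ∂(μ.map (Zt X (Finset.univ \ L))) := by
  have hind : IndepFun (Zt X L) (Zt X (Finset.univ \ L)) μ :=
    hindep.indepFun_finset L (Finset.univ \ L) Finset.disjoint_sdiff hX
  have heq : (fun ω => f (fun i => X i ω))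
      = fun ω => f (mrg L (Zt X L ω) (Zt X (Finset.univ \ L) ω)) := by
    funext ω; rw [mrg_Zt]
  rw [sigmaGen_eq_comap, heq]
  exact condexp_indepFun_integral (measurable_Zt hX L) (measurable_Zt hX _) hind
    (φ := fun z t => f (mrg L z t)) (hf.comp (measurable_mrg L)) (heq ▸ hWint)

/-- Step 2: the crucial contraction property
`E[E[f(X)|𝓕_L] | 𝓕_K] = E[f(X) | 𝓕_{L∩K}]`. -/
lemma condexp_condexp_inter (x₀ : ∀ i, E i)
    (hWint : Integrable (fun ω => f (fun i => X i ω)) μ) (L K : Finset (Fin n)) :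
    μ[ μ[(fun ω => f (fun i => X i ω)) | sigmaGen X L] | sigmaGen X K] =ᵐ[μ]
      μ[(fun ω => f (fun i => X i ω)) | sigmaGen X (L ∩ K)] := by
  classical
  set W : Ω → ℝ := fun ω => f (fun i => X i ω) with hW
  set κL := μ.map (Zt X (Finset.univ \ L)) with hκL
  set κK := μ.map (Zt X (Finset.univ \ K)) with hκK
  haveI : IsProbabilityMeasure κL := Measure.isProbabilityMeasure_map (measurable_Zt hX _).aemeasurable
  haveI : IsProbabilityMeasure κK := Measure.isProbabilityMeasure_map (measurable_Zt hX _).aemeasurable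
  set gL : (∀ i : {x // x ∈ L}, E i.1) → ℝ := fun z => ∫ t, f (mrg L z t) ∂κL with hgL
  have hgLsm : StronglyMeasurable gL :=
    (hf.comp (measurable_mrg L)).stronglyMeasurable.integral_prod_right'
  have h1 : μ[W | sigmaGen X L] =ᵐ[μ] fun ω => gL (Zt X L ω) :=
    condexp_eq_integral_mrg hX hindep hf hWint L
  set φ : (∀ i : {x // x ∈ K}, E i.1) → (∀ i : {x // x ∈ Finset.univ \ K}, E i.1) → ℝ :=
    fun z t => gL (fun i => mrg K z t i.1) with hφ
  have hφm : Measurable (Function.uncurry φ) :=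
    hgLsm.measurable.comp (measurable_pi_lambda _ fun i =>
      (measurable_pi_apply (i.1 : Fin n)).comp (measurable_mrg K))
  have h2 : (fun ω => gL (Zt X L ω))
      = fun ω => φ (Zt X K ω) (Zt X (Finset.univ \ K) ω) := by
    funext ω
    show gL (Zt X L ω) = gL (fun i => mrg K (Zt X K ω) (Zt X (Finset.univ \ K) ω) i.1)
    rw [mrg_Zt]
    rfl
  have hVint : Integrable (fun ω => φ (Zt X K ω) (Zt X (Finset.univ \ K) ω)) μ :=
    h2 ▸ (integrable_condExp.congr h1)
  have h3 : μ[(fun ω => φ (Zt X K ω) (Zt X (Finset.univ \ K) ω)) |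
        MeasurableSpace.comap (Zt X K) MeasurableSpace.pi]
      =ᵐ[μ] fun ω => ∫ t, φ (Zt X K ω) t ∂κK :=
    condexp_indepFun_integral (measurable_Zt hX K) (measurable_Zt hX _)
      (hindep.indepFun_finset _ _ Finset.disjoint_sdiff hX) hφm hVint
  set H : Ω → ℝ := fun ω => ∫ t, φ (Zt X K ω) t ∂κK with hH
  have h4 : μ[μ[W | sigmaGen X L] | sigmaGen X K] =ᵐ[μ] H := by
    rw [sigmaGen_eq_comap X K]
    exact (condExp_congr_ae (h1.trans (by rw [h2]))).trans h3
  set F : (∀ i, E i) → ℝ := fun x => ∫ t, φ (fun i => x i.1) t ∂κK with hF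
  have hFm : Measurable F := by
    have hm : Measurable (fun p : (∀ i, E i) × (∀ i : {x // x ∈ Finset.univ \ K}, E i.1) =>
        φ (fun i => p.1 i.1) p.2) :=
      hφm.comp ((measurable_pi_lambda _ fun i =>
        (measurable_pi_apply (i.1 : Fin n)).comp measurable_fst).prodMk measurable_snd)
    exact hm.stronglyMeasurable.integral_prod_right'.measurable
  have hFdep : ∀ x y : ∀ i, E i, (∀ i ∈ L ∩ K, x i = y i) → F x = F y := by
    intro x y hxy
    have hzz : ∀ t, φ (fun i => x i.1) t = φ (fun i => y i.1) t := by
      intro t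
      simp only [hφ]
      refine congrArg gL (funext fun i => ?_)
      unfold mrg
      by_cases h : (i.1 : Fin n) ∈ K
      · simp only [dif_pos h]
        exact hxy i.1 (Finset.mem_inter.mpr ⟨i.2, h⟩)
      · simp only [dif_neg h]
    simp only [hF, hzz]
  have hHm : Measurable[sigmaGen X (L ∩ K)] H :=
    measurable_sigmaGen_of_depends X x₀ hFm hFdep
  have hHint : Integrable H μ := integrable_condExp.congr h4
  have h5 : μ[H | sigmaGen X (L ∩ K)] = H :=
    condExp_of_stronglyMeasurable (sigmaGen_le X hX _) hHm.stronglyMeasurable hHint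
  calc μ[μ[W | sigmaGen X L] | sigmaGen X K]
      =ᵐ[μ] H := h4
    _ = μ[H | sigmaGen X (L ∩ K)] := h5.symm
    _ =ᵐ[μ] μ[μ[μ[W | sigmaGen X L] | sigmaGen X K] | sigmaGen X (L ∩ K)] :=
        condExp_congr_ae h4.symm
    _ =ᵐ[μ] μ[μ[W | sigmaGen X L] | sigmaGen X (L ∩ K)] :=
        condExp_condExp_of_le (sigmaGen_mono X Finset.inter_subset_right) (sigmaGen_le X hX K)
    _ =ᵐ[μ] μ[W | sigmaGen X (L ∩ K)] :=
        condExp_condExp_of_le (sigmaGen_mono X Finset.inter_subset_left) (sigmaGen_le X hX L)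

end Main

section Main2

variable {Ω : Type*} [m0 : MeasurableSpace Ω] {μ : Measure Ω} [IsProbabilityMeasure μ]
  {n : ℕ} {E : Fin n → Type*} [∀ i, MeasurableSpace (E i)] {X : ∀ i, Ω → E i}
  (hX : ∀ i, Measurable (X i))
  (hindep : iIndepFun X μ)
  {f : (∀ i, E i) → ℝ} (hf : Measurable f)

lemma integrable_hoeff (W : Ω → ℝ) (J : Finset (Fin n)) :
    Integrable (hoeff μ X W J) μ := by
  have : hoeff μ X W J
      = fun ω => ∑ L ∈ J.powerset, (((-1 : ℝ) ^ (J.card - L.card)) •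
          μ[W | sigmaGen X L]) ω := by
    funext ω
    rw [hoeff, Finset.sum_apply]
  rw [this]
  exact integrable_finset_sum _ fun L _ => (integrable_condExp).smul _

include hX hindep hf

/-- Step 3: conditioning a Hoeffding component on `𝓕_{[n] \ {j}}`. -/
lemma condexp_hoeff_erase (x₀ : ∀ i, E i)
    (hWint : Integrable (fun ω => f (fun i => X i ω)) μ) (j : Fin n) (J : Finset (Fin n)) :
    μ[hoeff μ X (fun ω => f (fun i => X i ω)) J | sigmaGen X (Finset.univ.erase j)]
      =ᵐ[μ] if j ∈ J then 0 else hoeff μ X (fun ω => f (fun i => X i ω)) J := by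
  classical
  set W : Ω → ℝ := fun ω => f (fun i => X i ω) with hWdef'
  set K : Finset (Fin n) := Finset.univ.erase j with hK
  have h0 : μ[hoeff μ X W J | sigmaGen X K] =ᵐ[μ]
      fun ω => ∑ L ∈ J.powerset, ((-1 : ℝ) ^ (J.card - L.card)) •
        ((μ[W | sigmaGen X (L ∩ K)]) ω) := by
    rw [hoeff]
    refine (condExp_finsetSum (fun L _ => (integrable_condExp).smul _) _).trans ?_
    have hterm : ∀ L ∈ J.powerset,
        μ[((-1 : ℝ) ^ (J.card - L.card)) • μ[W | sigmaGen X L] | sigmaGen X K]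
          =ᵐ[μ] fun ω => ((-1 : ℝ) ^ (J.card - L.card)) •
            ((μ[W | sigmaGen X (L ∩ K)]) ω) := by
      intro L _
      refine (condExp_smul _ _ _).trans ?_
      have := condexp_condexp_inter hX hindep hf x₀ hWint L K
      filter_upwards [this] with ω hω
      simp only [Pi.smul_apply, hω]
      exact congrArg _ hω
    have hsum := eventuallyEq_finset_sum J.powerset hterm
    refine EventuallyEq.trans ?_ hsum
    apply Filter.EventuallyEq.of_eq
    funext ω
    rw [Finset.sum_apply]
  by_cases hj : j ∈ J
  · rw [if_pos hj]
    refine h0.trans (Filter.EventuallyEq.of_eq ?_)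
    funext ω
    show _ = (0 : ℝ)
    rw [← Finset.insert_erase hj,
      Finset.sum_powerset_insert (Finset.notMem_erase j J), ← Finset.sum_add_distrib]
    refine Finset.sum_eq_zero fun t ht => ?_
    rw [Finset.mem_powerset] at ht
    have hjt : j ∉ t := fun h => Finset.notMem_erase j J (ht h)
    have hinter : (insert j t) ∩ K = t ∩ K := by
      ext i
      simp only [hK, Finset.mem_inter, Finset.mem_insert, Finset.mem_erase, Finset.mem_univ,
        and_true]
      constructor
      · rintro ⟨h1 | h1, h2⟩
        · exact absurd h1 h2
        · exact ⟨h1, h2⟩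
      · rintro ⟨h1, h2⟩
        exact ⟨Or.inr h1, h2⟩
    have hcard1 : (insert j (J.erase j)).card = (J.erase j).card + 1 :=
      Finset.card_insert_of_notMem (Finset.notMem_erase j J)
    have hcard2 : (insert j t).card = t.card + 1 := Finset.card_insert_of_notMem hjt
    have hcardle : t.card ≤ (J.erase j).card := Finset.card_le_card ht
    rw [hinter, hcard1, hcard2]
    have he1 : (J.erase j).card + 1 - t.card = ((J.erase j).card - t.card) + 1 := by omega
    have he2 : (J.erase j).card + 1 - (t.card + 1) = (J.erase j).card - t.card := by omega
    rw [he1, he2, pow_succ]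
    simp only [smul_eq_mul]
    ring
  · rw [if_neg hj]
    refine h0.trans (Filter.EventuallyEq.of_eq ?_)
    funext ω
    rw [hoeff, Finset.sum_apply]
    refine Finset.sum_congr rfl fun L hL => ?_
    rw [Finset.mem_powerset] at hL
    have : L ∩ K = L := by
      refine Finset.inter_eq_left.mpr fun i hi => ?_
      rw [hK, Finset.mem_erase]
      exact ⟨fun h => hj (h ▸ hL hi), Finset.mem_univ i⟩
    rw [this]
    rfl

end Main2

section Main3

variable {Ω : Type*} [m0 : MeasurableSpace Ω] {μ : Measure Ω} [IsProbabilityMeasure μ]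
  {n : ℕ} {E : Fin n → Type*} [∀ i, MeasurableSpace (E i)] {X : ∀ i, Ω → E i}
  (hX : ∀ i, Measurable (X i))
  (hindep : iIndepFun X μ)
  {f : (∀ i, E i) → ℝ} (hf : Measurable f)

include hX hindep hf

/-- Step 5c: `E[f(X) | 𝓕_{[n] \ {j}}]` as an integral over the law of `X j`. -/
lemma condexp_erase_eq_integral_update (x₀ : ∀ i, E i)
    (hWint : Integrable (fun ω => f (fun i => X i ω)) μ) (j : Fin n) :
    μ[(fun ω => f (fun i => X i ω)) | sigmaGen X (Finset.univ.erase j)] =ᵐ[μ]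
      fun ω => ∫ t, f (Function.update (fun i => X i ω) j t) ∂(μ.map (X j)) := by
  classical
  set K : Finset (Fin n) := Finset.univ.erase j with hK
  set vec : (∀ i : {x // x ∈ K}, E i.1) → ∀ k, E k :=
    fun z k => if h : k ∈ K then z ⟨k, h⟩ else x₀ k with hvecdef
  have hvecm : Measurable vec := by
    refine measurable_pi_lambda _ fun k => ?_
    by_cases h : k ∈ K
    · simp only [hvecdef, dif_pos h]
      exact measurable_pi_apply _
    · simp only [hvecdef, dif_neg h]
      exact measurable_const
  set φ : (∀ i : {x // x ∈ K}, E i.1) → E j → ℝ :=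
    fun z t => f (Function.update (vec z) j t) with hφ
  have hφm : Measurable (Function.uncurry φ) :=
    hf.comp (measurable_update'.comp ((hvecm.comp measurable_fst).prodMk measurable_snd))
  have hjK : j ∉ K := Finset.notMem_erase j _
  have hind : IndepFun (Zt X K) (X j) μ := by
    have h1 := hindep.indepFun_finset K {j}
      (Finset.disjoint_singleton_right.mpr hjK) hX
    have h2 := h1.comp measurable_id
      (measurable_pi_apply (⟨j, Finset.mem_singleton_self j⟩ : {x // x ∈ ({j} : Finset (Fin n))}))
    exact h2
  have heqW : (fun ω => f (fun i => X i ω)) = fun ω => φ (Zt X K ω) (X j ω) := by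
    funext ω
    refine congrArg f (funext fun k => ?_)
    by_cases h : k = j
    · subst h; rw [Function.update_self]
    · rw [Function.update_of_ne h]
      simp only [hvecdef]
      rw [dif_pos (Finset.mem_erase.mpr ⟨h, Finset.mem_univ k⟩)]
      rfl
  have key := condexp_indepFun_integral (measurable_Zt hX K) (hX j) hind hφm
    (heqW ▸ hWint)
  rw [sigmaGen_eq_comap, heqW]
  refine key.trans (Filter.EventuallyEq.of_eq ?_)
  funext ω
  refine integral_congr_ae (Filter.Eventually.of_forall fun t => ?_)
  refine congrArg f (funext fun k => ?_)
  by_cases h : k = j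
  · subst h; rw [Function.update_self, Function.update_self]
  · rw [Function.update_of_ne h, Function.update_of_ne h]
    simp only [hvecdef]
    rw [dif_pos (Finset.mem_erase.mpr ⟨h, Finset.mem_univ k⟩)]
    rfl

end Main3

theorem linear_regression_exchangeable_pair
    {Ω : Type*} [m0 : MeasurableSpace Ω] (μ : Measure Ω) [IsProbabilityMeasure μ]
    {n : ℕ} (hn : 0 < n) {E : Fin n → Type*} [∀ i, MeasurableSpace (E i)]
    (X Y : ∀ i, Ω → E i) (α : Ω → Fin n)
    (hX : ∀ i, Measurable (X i)) (hY : ∀ i, Measurable (Y i)) (hα : Measurable α)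
    (hindep : iIndepFun X μ)
    -- `Y` is an independent copy of `X` and `X, Y, α` are jointly independent:
    (hcopy : Measure.map (fun ω i => Y i ω) μ = Measure.map (fun ω i => X i ω) μ)
    (hXY : IndepFun (fun ω i => X i ω) (fun ω i => Y i ω) μ)
    (hXYα : IndepFun (fun ω => ((fun i => X i ω), fun i => Y i ω)) α μ)
    -- `α` is uniformly distributed on `{1, …, n}`:
    (hunif : ∀ j : Fin n, μ (α ⁻¹' {j}) = (n : ENNReal)⁻¹)
    (f : (∀ i, E i) → ℝ) (hf : Measurable f)
    (W : Ω → ℝ) (hWdef : W = fun ω => f (fun i => X i ω))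
    (hW2 : MemLp W 2 μ) (d : ℕ) (hdeg : IsDegenUStat μ X W d)
    -- the resampled vector `X'` and `W' = f(X')`:
    (W' : Ω → ℝ)
    (hW'def : W' = fun ω => f (fun j => if α ω = j then Y j ω else X j ω)) :
    μ[(fun ω => W' ω - W ω) | sigmaGen X Finset.univ] =ᵐ[μ]
        (fun ω => -((d : ℝ) / n) * W ω) ∧
      μ[(fun ω => W' ω - W ω) | MeasurableSpace.comap W inferInstance] =ᵐ[μ]
        (fun ω => -((d : ℝ) / n) * W ω) := by
  classical
  have hΩne : Nonempty Ω := by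
    have h1 : μ Set.univ ≠ 0 := by simp
    obtain ⟨ω₀, -⟩ := nonempty_of_measure_ne_zero h1
    exact ⟨ω₀⟩
  obtain ⟨ω₀⟩ := hΩne
  set x₀ : ∀ i, E i := fun i => X i ω₀ with hx₀
  set Xv : Ω → ∀ i, E i := fun ω i => X i ω with hXvdef
  set Yv : Ω → ∀ i, E i := fun ω i => Y i ω with hYvdef
  have hXvm : Measurable Xv := measurable_pi_lambda _ hX
  have hYvm : Measurable Yv := measurable_pi_lambda _ hY
  have hWm : Measurable W := by rw [hWdef]; exact hf.comp hXvm
  have hWint : Integrable W μ := hW2.integrable one_le_two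
  have hWint' : Integrable (fun ω => f (fun i => X i ω)) μ := hWdef ▸ hWint
  set ν : ∀ j, Measure (E j) := fun j => μ.map (X j) with hνdef
  haveI hνprob : ∀ j, IsProbabilityMeasure (ν j) :=
    fun j => Measure.isProbabilityMeasure_map (hX j).aemeasurable
  haveI : IsProbabilityMeasure (μ.map Xv) := Measure.isProbabilityMeasure_map hXvm.aemeasurable
  haveI : IsProbabilityMeasure (μ.map Yv) := Measure.isProbabilityMeasure_map hYvm.aemeasurable
  haveI : IsProbabilityMeasure (μ.map α) := Measure.isProbabilityMeasure_map hα.aemeasurable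
  have hW'm : Measurable W' := by
    rw [hW'def]
    exact hf.comp (measurable_pi_lambda _ fun k =>
      Measurable.ite (hα (measurableSet_singleton k)) (hY k) (hX k))
  -- laws
  have hlawX : μ.map Xv = Measure.pi ν := map_eq_pi hX hindep
  have hmapXY : μ.map (fun ω => (Xv ω, Yv ω)) = (μ.map Xv).prod (μ.map Yv) :=
    (indepFun_iff_map_prod_eq_prod_map_map hXvm.aemeasurable hYvm.aemeasurable).mp hXY
  have hYj_law : ∀ j, μ.map (Y j) = μ.map (X j) := by
    intro j
    calc μ.map (Y j) = Measure.map (fun y : ∀ i, E i => y j) (μ.map Yv) :=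
          (Measure.map_map (measurable_pi_apply j) hYvm).symm
      _ = Measure.map (fun y : ∀ i, E i => y j) (μ.map Xv) := by rw [hYvdef, hXvdef, hcopy]
      _ = μ.map (X j) := Measure.map_map (measurable_pi_apply j) hXvm
  -- integrability of the single-coordinate resamplings
  have hIf : Integrable f (μ.map Xv) :=
    (integrable_map_measure hf.aestronglyMeasurable hXvm.aemeasurable).mpr hWint'
  have hIψ : ∀ j, Integrable
      (fun q : (∀ i, E i) × (∀ i, E i) => f (Function.update q.1 j (q.2 j)))
      ((μ.map Xv).prod (μ.map Yv)) := by
    intro j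
    have hmapu : Measure.map (fun p : (∀ i, E i) × E j => Function.update p.1 j p.2)
        ((μ.map Xv).prod (ν j)) = μ.map Xv := by
      rw [hlawX]; exact map_update_pi ν j
    have hIfu : Integrable (fun p : (∀ i, E i) × E j => f (Function.update p.1 j p.2))
        ((μ.map Xv).prod (ν j)) := by
      have := (integrable_map_measure hf.aestronglyMeasurable
        measurable_update'.aemeasurable).mp (by rw [hmapu]; exact hIf)
      exact this
    have hmapproj : Measure.map
        (Prod.map (id : (∀ i, E i) → ∀ i, E i) (fun y : ∀ i, E i => y j))
        ((μ.map Xv).prod (μ.map Yv)) = (μ.map Xv).prod (ν j) := by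
      rw [← Measure.map_prod_map _ _ measurable_id (measurable_pi_apply j), Measure.map_id]
      congr 1
      rw [Measure.map_map (measurable_pi_apply j) hYvm]
      exact hYj_law j
    have := (integrable_map_measure
      ((hf.comp (measurable_update'
        : Measurable fun p : (∀ i, E i) × E j => Function.update p.1 j p.2)).aestronglyMeasurable)
      (measurable_id.prodMap (measurable_pi_apply j)).aemeasurable).mp
      (by rw [hmapproj]; exact hIfu)
    exact this
  have hupdint : ∀ j, Integrable (fun ω => f (Function.update (Xv ω) j (Yv ω j))) μ := by
    intro j
    have hm : Measurable (fun q : (∀ i, E i) × (∀ i, E i) =>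
        f (Function.update q.1 j (q.2 j))) :=
      hf.comp (measurable_update'.comp
        (measurable_fst.prodMk ((measurable_pi_apply j).comp measurable_snd)))
    have := (integrable_map_measure hm.aestronglyMeasurable
      (hXvm.prodMk hYvm).aemeasurable).mp (by rw [hmapXY]; exact hIψ j)
    exact this
  -- integrability of W'
  have hW'eqα : ∀ ω, W' ω = f (Function.update (Xv ω) (α ω) (Yv ω (α ω))) := by
    intro ω
    rw [hW'def]
    refine congrArg f (funext fun k => ?_)
    by_cases h : k = α ω
    · subst h; rw [Function.update_self, if_pos rfl]
    · rw [Function.update_of_ne h, if_neg fun hh => h hh.symm]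
  have hW'int : Integrable W' μ := by
    refine Integrable.mono
      (g := fun ω => ∑ j, ‖f (Function.update (Xv ω) j (Yv ω j))‖)
      (integrable_finset_sum _ fun j _ => (hupdint j).norm)
      hW'm.aestronglyMeasurable ?_
    refine Filter.Eventually.of_forall fun ω => ?_
    rw [hW'eqα ω]
    calc ‖f (Function.update (Xv ω) (α ω) (Yv ω (α ω)))‖
        ≤ ∑ j, ‖f (Function.update (Xv ω) j (Yv ω j))‖ :=
          Finset.single_le_sum (f := fun j => ‖f (Function.update (Xv ω) j (Yv ω j))‖)
            (fun j _ => norm_nonneg _) (Finset.mem_univ (α ω))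
      _ ≤ ‖∑ j, ‖f (Function.update (Xv ω) j (Yv ω j))‖‖ := le_abs_self _
  -- independence of Xv and (Yv, α)
  set T : Ω → (∀ i, E i) × Fin n := fun ω => (Yv ω, α ω) with hTdef
  have hTm : Measurable T := hYvm.prodMk hα
  haveI : IsProbabilityMeasure (μ.map T) := Measure.isProbabilityMeasure_map hTm.aemeasurable
  have hYα : IndepFun Yv α μ := hXYα.comp measurable_snd measurable_id
  have hρ : μ.map T = (μ.map Yv).prod (μ.map α) :=
    (indepFun_iff_map_prod_eq_prod_map_map hYvm.aemeasurable hα.aemeasurable).mp hYα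
  have hmapXYα : μ.map (fun ω => ((Xv ω, Yv ω), α ω))
      = ((μ.map Xv).prod (μ.map Yv)).prod (μ.map α) := by
    rw [← hmapXY]
    exact (indepFun_iff_map_prod_eq_prod_map_map
      (hXvm.prodMk hYvm).aemeasurable hα.aemeasurable).mp hXYα
  have hmapXT : μ.map (fun ω => (Xv ω, T ω)) = (μ.map Xv).prod (μ.map T) := by
    have hassoc : μ.map (fun ω => (Xv ω, T ω))
        = Measure.map (MeasurableEquiv.prodAssoc) (μ.map (fun ω => ((Xv ω, Yv ω), α ω))) := by
      rw [Measure.map_map MeasurableEquiv.prodAssoc.measurable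
        ((hXvm.prodMk hYvm).prodMk hα)]
      rfl
    rw [hassoc, hmapXYα, Measure.prodAssoc_prod, hρ]
  have hindXT : IndepFun Xv T μ :=
    (indepFun_iff_map_prod_eq_prod_map_map hXvm.aemeasurable hTm.aemeasurable).mpr hmapXT
  -- the conditional expectation of W' given all of X
  set φ' : (∀ i, E i) → ((∀ i, E i) × Fin n) → ℝ :=
    fun x p => f (fun k => if p.2 = k then p.1 k else x k) with hφ'def
  have hφ'm : Measurable (Function.uncurry φ') := by
    refine hf.comp (measurable_pi_lambda _ fun k => ?_)
    refine Measurable.ite ?_ ((measurable_pi_apply k).comp (measurable_fst.comp measurable_snd))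
      ((measurable_pi_apply k).comp measurable_fst)
    exact (measurable_snd.comp measurable_snd) (measurableSet_singleton k)
  have hW'eq : W' = fun ω => φ' (Xv ω) (T ω) := by
    rw [hW'def]
  have h5b0 : μ[W' | MeasurableSpace.comap Xv MeasurableSpace.pi]
      =ᵐ[μ] fun ω => ∫ p, φ' (Xv ω) p ∂(μ.map T) := by
    rw [hW'eq]
    exact condexp_indepFun_integral hXvm hTm hindXT hφ'm (hW'eq ▸ hW'int)
  have hintφ' : Integrable (Function.uncurry φ') ((μ.map Xv).prod (μ.map T)) := by
    rw [← hmapXT]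
    exact (integrable_map_measure hφ'm.aestronglyMeasurable
      (hXvm.prodMk hTm).aemeasurable).mpr
      (show Integrable (fun ω => φ' (Xv ω) (T ω)) μ from hW'eq ▸ hW'int)
  have hsecφ' : ∀ᵐ x ∂(μ.map Xv), Integrable (fun p => φ' x p) (μ.map T) :=
    hintφ'.prod_right_ae
  have hsecψ : ∀ j, ∀ᵐ x ∂(μ.map Xv),
      Integrable (fun y : ∀ i, E i => f (Function.update x j (y j))) (μ.map Yv) :=
    fun j => (hIψ j).prod_right_ae
  have key : ∀ᵐ x ∂(μ.map Xv), ∫ p, φ' x p ∂(μ.map T)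
      = (n : ℝ)⁻¹ * ∑ j, ∫ t, f (Function.update x j t) ∂(ν j) := by
    have hall : ∀ᵐ x ∂(μ.map Xv), ∀ j,
        Integrable (fun y : ∀ i, E i => f (Function.update x j (y j))) (μ.map Yv) :=
      ae_all_iff.mpr hsecψ
    filter_upwards [hsecφ', hall] with x hx hx2
    rw [hρ] at hx
    have hsingle : ∀ a : Fin n, (μ.map α) {a} = (n : ENNReal)⁻¹ := fun a => by
      rw [Measure.map_apply hα (measurableSet_singleton a)]; exact hunif a
    have hφ'upd : ∀ (y : ∀ i, E i) (j : Fin n),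
        φ' x (y, j) = f (Function.update x j (y j)) := by
      intro y j
      refine congrArg f (funext fun k => ?_)
      by_cases h : k = j
      · subst h; rw [Function.update_self, if_pos rfl]
      · rw [Function.update_of_ne h, if_neg fun hh => h hh.symm]
    have e2 : ∀ y : ∀ i, E i, ∫ a, φ' x (y, a) ∂(μ.map α)
        = (n : ℝ)⁻¹ * ∑ j, f (Function.update x j (y j)) := by
      intro y
      rw [integral_fintype (Integrable.of_finite)]
      simp only [hsingle, hφ'upd, ENNReal.toReal_inv, ENNReal.toReal_natCast, measureReal_def,
        smul_eq_mul, Finset.mul_sum]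
    calc ∫ p, φ' x p ∂(μ.map T)
        = ∫ y, ∫ a, φ' x (y, a) ∂(μ.map α) ∂(μ.map Yv) := by
          rw [hρ]; exact integral_prod _ hx
      _ = ∫ y, (n : ℝ)⁻¹ * ∑ j, f (Function.update x j (y j)) ∂(μ.map Yv) := by
          simp only [e2]
      _ = (n : ℝ)⁻¹ * ∑ j, ∫ y, f (Function.update x j (y j)) ∂(μ.map Yv) := by
          rw [integral_const_mul, integral_finset_sum _ fun j _ => hx2 j]
      _ = (n : ℝ)⁻¹ * ∑ j, ∫ t, f (Function.update x j t) ∂(ν j) := by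
          congr 1
          refine Finset.sum_congr rfl fun j _ => ?_
          have hmm : Measure.map (fun y : ∀ i, E i => y j) (μ.map Yv) = ν j := by
            rw [Measure.map_map (measurable_pi_apply j) hYvm]
            exact hYj_law j
          rw [← hmm]
          exact (integral_map (measurable_pi_apply j).aemeasurable
            ((hf.comp (measurable_update x)).aestronglyMeasurable)).symm
  have h5b : μ[W' | sigmaGen X Finset.univ] =ᵐ[μ]
      fun ω => (n : ℝ)⁻¹ * ∑ j, ∫ t, f (Function.update (Xv ω) j t) ∂(ν j) := by
    rw [sigmaGen_univ_eq_comap]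
    exact h5b0.trans (ae_of_ae_map hXvm.aemeasurable key)
  -- conditional expectations of W given the 𝓕_{[n] \ {j}}
  have h5c : ∀ j, μ[W | sigmaGen X (Finset.univ.erase j)] =ᵐ[μ]
      fun ω => ∫ t, f (Function.update (Xv ω) j t) ∂(ν j) := by
    intro j
    rw [hWdef]
    exact condexp_erase_eq_integral_update hX hindep hf x₀ hWint' j
  have hstep5 : μ[W' | sigmaGen X Finset.univ] =ᵐ[μ]
      fun ω => (n : ℝ)⁻¹ * ∑ j, (μ[W | sigmaGen X (Finset.univ.erase j)]) ω := by
    refine h5b.trans ?_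
    have hsum := eventuallyEq_finset_sum Finset.univ
      (fun j (_ : j ∈ Finset.univ) => (h5c j).symm)
    filter_upwards [hsum] with ω hω
    rw [hω]
  -- Hoeffding decomposition step
  have hdeg' : W =ᵐ[μ] fun ω => ∑ J ∈ DD n d, hoeff μ X W J ω := hdeg
  have hsumj : ∀ j, μ[W | sigmaGen X (Finset.univ.erase j)] =ᵐ[μ]
      fun ω => ∑ J ∈ DD n d,
        ((if j ∈ J then (0 : Ω → ℝ) else hoeff μ X W J) ω) := by
    intro j
    have h1 : (fun ω => ∑ J ∈ DD n d, hoeff μ X W J ω)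
        = ∑ J ∈ DD n d, hoeff μ X W J := by
      funext ω; rw [Finset.sum_apply]
    have h2 : μ[W | sigmaGen X (Finset.univ.erase j)]
        =ᵐ[μ] μ[∑ J ∈ DD n d, hoeff μ X W J | sigmaGen X (Finset.univ.erase j)] := by
      refine condExp_congr_ae ?_
      refine hdeg'.trans (Filter.EventuallyEq.of_eq h1)
    refine h2.trans ?_
    refine (condExp_finsetSum (fun J _ => integrable_hoeff W J) _).trans ?_
    have h3 : ∀ J ∈ DD n d,
        μ[hoeff μ X W J | sigmaGen X (Finset.univ.erase j)]
          =ᵐ[μ] (if j ∈ J then (0 : Ω → ℝ) else hoeff μ X W J) := by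
      intro J _
      have := condexp_hoeff_erase hX hindep hf x₀ hWint' j J
      rw [hWdef]
      exact this
    refine EventuallyEq.trans (Filter.EventuallyEq.of_eq ?_)
      (eventuallyEq_finset_sum (DD n d) h3)
    funext ω
    rw [Finset.sum_apply]
  -- step 6: combine
  have hstep6 : μ[W' | sigmaGen X Finset.univ] =ᵐ[μ]
      fun ω => (n : ℝ)⁻¹ * ((n - d : ℕ) • W ω) := by
    refine hstep5.trans ?_
    have hsum := eventuallyEq_finset_sum Finset.univ
      (fun j (_ : j ∈ Finset.univ) => hsumj j)
    filter_upwards [hsum, hdeg'] with ω hω hWω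
    show (n : ℝ)⁻¹ * ∑ j, (μ[W | sigmaGen X (Finset.univ.erase j)]) ω = _
    rw [hω]
    have hswap : ∑ j, ∑ J ∈ DD n d, ((if j ∈ J then (0 : Ω → ℝ) else hoeff μ X W J) ω)
        = (n - d : ℕ) • ∑ J ∈ DD n d, hoeff μ X W J ω := by
      rw [Finset.sum_comm, Finset.smul_sum]
      refine Finset.sum_congr rfl fun J hJ => ?_
      have hcard : J.card = d := (Finset.mem_filter.mp hJ).2
      simp only [apply_ite (fun g : Ω → ℝ => g ω), Pi.zero_apply]
      rw [Finset.sum_ite, Finset.sum_const_zero, zero_add, Finset.sum_const]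
      congr 1
      have hfil : Finset.univ.filter (fun j : Fin n => ¬ j ∈ J) = Finset.univ \ J := by
        ext i; simp
      rw [hfil, Finset.card_sdiff_of_subset (Finset.subset_univ J), Finset.card_fin, hcard]
    rw [hswap, ← hWω]
  have hWcond : μ[W | sigmaGen X Finset.univ] = W := by
    have hWsm : Measurable[sigmaGen X Finset.univ] W := by
      rw [hWdef, sigmaGen_univ_eq_comap]
      exact hf.comp (comap_measurable _)
    exact condExp_of_stronglyMeasurable (sigmaGen_le X hX _) hWsm.stronglyMeasurable hWint
  have hsub : μ[(fun ω => W' ω - W ω) | sigmaGen X Finset.univ]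
      =ᵐ[μ] μ[W' | sigmaGen X Finset.univ] - μ[W | sigmaGen X Finset.univ] := by
    have h : (fun ω => W' ω - W ω) = W' - W := rfl
    rw [h]
    exact condExp_sub hW'int hWint _
  have hcoef : ∀ᵐ ω ∂μ, (n : ℝ)⁻¹ * ((n - d : ℕ) • W ω) - W ω = -((d : ℝ) / n) * W ω := by
    by_cases hdn : d ≤ n
    · refine Filter.Eventually.of_forall fun ω => ?_
      have hne : (n : ℝ) ≠ 0 := Nat.cast_ne_zero.mpr hn.ne'
      rw [nsmul_eq_mul, Nat.cast_sub hdn]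
      field_simp
      ring
    · have hDD : DD n d = ∅ := by
        rw [DD, Finset.filter_eq_empty_iff]
        intro J _
        have hJn : J.card ≤ n := le_trans (Finset.card_le_univ J)
          (le_of_eq (Finset.card_fin n))
        omega
      have hW0 : W =ᵐ[μ] 0 := by
        refine hdeg'.trans (Filter.EventuallyEq.of_eq ?_)
        funext ω; rw [hDD]; simp
      filter_upwards [hW0] with ω hω
      rw [hω]
      simp
  have main1 : μ[(fun ω => W' ω - W ω) | sigmaGen X Finset.univ]
      =ᵐ[μ] fun ω => -((d : ℝ) / n) * W ω := by
    refine hsub.trans ?_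
    have h1 : μ[W' | sigmaGen X Finset.univ] - μ[W | sigmaGen X Finset.univ]
        =ᵐ[μ] fun ω => (n : ℝ)⁻¹ * ((n - d : ℕ) • W ω) - W ω := by
      rw [hWcond]
      filter_upwards [hstep6] with ω hω
      show (μ[W' | sigmaGen X Finset.univ]) ω - W ω = _
      rw [hω]
    exact h1.trans hcoef
  refine ⟨main1, ?_⟩
  -- second claim via the tower property
  have hmWle : MeasurableSpace.comap W inferInstance ≤ sigmaGen X Finset.univ := by
    rw [sigmaGen_univ_eq_comap, hWdef]
    have h1 : (fun ω => f (fun i => X i ω)) = f ∘ Xv := rfl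
    rw [h1, ← MeasurableSpace.comap_comp]
    exact MeasurableSpace.comap_mono hf.comap_le
  refine EventuallyEq.trans (condExp_condExp_of_le hmWle (sigmaGen_le X hX _)).symm ?_
  refine (condExp_congr_ae main1).trans ?_
  have hsm : Measurable[MeasurableSpace.comap W inferInstance]
      (fun ω => -((d : ℝ) / n) * W ω) := (comap_measurable W).const_mul _
  rw [condExp_of_stronglyMeasurable hWm.comap_le hsm.stronglyMeasurable (hWint.const_mul _)]
end
end

section
/- Let 1 ≤ p,q ≤ n and let W, V ∈ L²(P) be degenerate U-statistics of orders p and q, respectively, with respect to the same independent sequence X_1,…,X_n, with Hoeffding components W_J (J ∈ 𝓓_p) and V_K (K ∈ 𝓓_q). If J ∈ 𝓓_p, K ∈ 𝓓_q and L ⊆ [n] are such that the symmetric difference J Δ K = (J∖K) ∪ (K∖J) is not contained in L, then E[W_J V_K | 𝓕_L] = 0 almost surely. -/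
open MeasureTheory ProbabilityTheory Finset Filter

noncomputable section

namespace HoeffAux
set_option linter.unusedSectionVars false
variable {Ω : Type*} [m0 : MeasurableSpace Ω] {μ : Measure Ω} [IsProbabilityMeasure μ]
  {n : ℕ} {E : Fin n → Type*} [∀ i, MeasurableSpace (E i)] {X : ∀ i, Ω → E i}

lemma sigmaGen_le (hX : ∀ i, Measurable (X i)) (A : Finset (Fin n)) : sigmaGen X A ≤ m0 :=
  iSup₂_le fun i _ => (hX i).comap_le
lemma sigmaGen_mono {A B : Finset (Fin n)} (h : A ⊆ B) : sigmaGen X A ≤ sigmaGen X B :=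
  iSup₂_le fun i hi =>
    le_iSup₂ (f := fun i (_ : i ∈ B) => MeasurableSpace.comap (X i) inferInstance) i (h hi)
lemma sigmaGen_union (A B : Finset (Fin n)) :
    sigmaGen X (A ∪ B) = sigmaGen X A ⊔ sigmaGen X B := by
  refine le_antisymm (iSup₂_le fun i hi => ?_)
    (sup_le (sigmaGen_mono subset_union_left) (sigmaGen_mono subset_union_right))
  rcases Finset.mem_union.1 hi with h | h
  · exact le_trans (le_iSup₂ (f := fun i (_ : i ∈ A) =>
      MeasurableSpace.comap (X i) inferInstance) i h) le_sup_left
  · exact le_trans (le_iSup₂ (f := fun i (_ : i ∈ B) =>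
      MeasurableSpace.comap (X i) inferInstance) i h) le_sup_right
lemma indep_sigmaGen (hX : ∀ i, Measurable (X i))
    (hindep : iIndepFun X μ)
    {A B : Finset (Fin n)} (h : Disjoint A B) :
    Indep (sigmaGen X A) (sigmaGen X B) μ := by
  have h' := indep_iSup_of_disjoint (m := fun i => MeasurableSpace.comap (X i) inferInstance)
    (fun i => (hX i).comap_le) hindep (S := ↑A) (T := ↑B) (Finset.disjoint_coe.2 h)
  have eA : (⨆ i ∈ (↑A : Set (Fin n)), MeasurableSpace.comap (X i) inferInstance)
      = sigmaGen X A := by simp [sigmaGen]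
  have eB : (⨆ i ∈ (↑B : Set (Fin n)), MeasurableSpace.comap (X i) inferInstance)
      = sigmaGen X B := by simp [sigmaGen]
  rwa [eA, eB] at h'

/-- Set-integral over an event independent of `h` factorizes. -/
lemma setIntegral_of_indep (hX : ∀ i, Measurable (X i)) {A C : Finset (Fin n)}
    (hind : Indep (sigmaGen X A) (sigmaGen X C) μ) {h : Ω → ℝ} (hint : Integrable h μ)
    (hmeas : StronglyMeasurable[sigmaGen X A] h) {t : Set Ω}
    (ht : MeasurableSet[sigmaGen X C] t) :
    ∫ ω in t, h ω ∂μ = (μ t).toReal • ∫ ω, h ω ∂μ := by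
  have hm₁ : sigmaGen X A ≤ m0 := sigmaGen_le hX _
  have hm₂ : sigmaGen X C ≤ m0 := sigmaGen_le hX _
  haveI : SigmaFinite (μ.trim hm₂) := inferInstance
  calc ∫ ω in t, h ω ∂μ = ∫ ω in t, (μ[h|sigmaGen X C]) ω ∂μ :=
        (setIntegral_condExp hm₂ hint ht).symm
    _ = ∫ _ω in t, (∫ ω, h ω ∂μ) ∂μ := by
        refine setIntegral_congr_ae (hm₂ t ht) ?_
        filter_upwards [condExp_indep_eq hm₁ hm₂ hmeas hind] with ω hω _ using hω
    _ = (μ t).toReal • ∫ ω, h ω ∂μ := by rw [setIntegral_const, measureReal_def]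

/-- Key lemma: if `g` is integrable and `𝓕_A`-measurable, then `E[g|𝓕_B] = E[g|𝓕_{A∩B}]`. -/
lemma condexp_sigmaGen_of_stronglyMeasurable (hX : ∀ i, Measurable (X i))
    (hindep : iIndepFun X μ)
    {A B : Finset (Fin n)} {g : Ω → ℝ} (hgint : Integrable g μ)
    (hgm : StronglyMeasurable[sigmaGen X A] g) :
    μ[g | sigmaGen X B] =ᵐ[μ] μ[g | sigmaGen X (A ∩ B)] := by
  have h1 : sigmaGen X (A ∩ B) ≤ m0 := sigmaGen_le hX _
  have h2 : sigmaGen X (B \ A) ≤ m0 := sigmaGen_le hX _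
  have hA : sigmaGen X A ≤ m0 := sigmaGen_le hX _
  have hB : sigmaGen X B ≤ m0 := sigmaGen_le hX _
  haveI : SigmaFinite (μ.trim hB) := inferInstance
  haveI : SigmaFinite (μ.trim h1) := inferInstance
  have hBsup : sigmaGen X B = sigmaGen X (A ∩ B) ⊔ sigmaGen X (B \ A) := by
    rw [← sigmaGen_union]
    congr 1
    ext j
    simp only [Finset.mem_union, Finset.mem_inter, Finset.mem_sdiff]
    tauto
  have hind_A2 : Indep (sigmaGen X A) (sigmaGen X (B \ A)) μ :=
    indep_sigmaGen hX hindep Finset.disjoint_sdiff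
  have hind_12 : Indep (sigmaGen X (A ∩ B)) (sigmaGen X (B \ A)) μ :=
    indep_of_indep_of_le_left hind_A2 (sigmaGen_mono Finset.inter_subset_left)
  have hPpi : IsPiSystem {s : Set Ω | ∃ s₁ s₂, MeasurableSet[sigmaGen X (A ∩ B)] s₁ ∧
      MeasurableSet[sigmaGen X (B \ A)] s₂ ∧ s = s₁ ∩ s₂} := by
    rintro s ⟨s₁, s₂, hs₁, hs₂, rfl⟩ t ⟨t₁, t₂, ht₁, ht₂, rfl⟩ -
    exact ⟨s₁ ∩ t₁, s₂ ∩ t₂, hs₁.inter ht₁, hs₂.inter ht₂, by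
      rw [Set.inter_inter_inter_comm]⟩
  have hPgen : sigmaGen X B = MeasurableSpace.generateFrom {s : Set Ω | ∃ s₁ s₂,
      MeasurableSet[sigmaGen X (A ∩ B)] s₁ ∧ MeasurableSet[sigmaGen X (B \ A)] s₂ ∧
      s = s₁ ∩ s₂} := by
    rw [hBsup]
    refine le_antisymm (sup_le ?_ ?_) (MeasurableSpace.generateFrom_le ?_)
    · exact fun s hs => MeasurableSpace.measurableSet_generateFrom
        ⟨s, Set.univ, hs, MeasurableSet.univ, (Set.inter_univ s).symm⟩
    · exact fun s hs => MeasurableSpace.measurableSet_generateFrom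
        ⟨Set.univ, s, MeasurableSet.univ, hs, (Set.univ_inter s).symm⟩
    · rintro s ⟨s₁, s₂, hs₁, hs₂, rfl⟩
      exact ((le_sup_left : sigmaGen X (A ∩ B) ≤ _) s₁ hs₁).inter
        ((le_sup_right : sigmaGen X (B \ A) ≤ _) s₂ hs₂)
  have key : ∀ s : Set Ω, MeasurableSet[sigmaGen X B] s →
      ∫ ω in s, (μ[g|sigmaGen X (A ∩ B)]) ω ∂μ = ∫ ω in s, g ω ∂μ := by
    have main := @MeasurableSpace.induction_on_inter Ω (sigmaGen X B)
      (fun s _ => ∫ ω in s, (μ[g|sigmaGen X (A ∩ B)]) ω ∂μ = ∫ ω in s, g ω ∂μ) _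
      hPgen hPpi ?_ ?_ ?_ ?_
    · exact fun s hs => main s hs
    · simp
    · rintro t ⟨t₁, t₂, ht₁, ht₂, rfl⟩
      have ht₁0 : MeasurableSet t₁ := h1 t₁ ht₁
      have e1 : ∫ ω in t₁ ∩ t₂, (μ[g|sigmaGen X (A ∩ B)]) ω ∂μ
          = ∫ ω in t₂, t₁.indicator (μ[g|sigmaGen X (A ∩ B)]) ω ∂μ := by
        rw [setIntegral_indicator ht₁0, Set.inter_comm]
      have e2 : ∫ ω in t₁ ∩ t₂, g ω ∂μ = ∫ ω in t₂, t₁.indicator g ω ∂μ := by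
        rw [setIntegral_indicator ht₁0, Set.inter_comm]
      rw [e1, e2,
        setIntegral_of_indep hX hind_12 (integrable_condExp.indicator ht₁0)
          (stronglyMeasurable_condExp.indicator ht₁) ht₂,
        setIntegral_of_indep hX hind_A2 (hgint.indicator ht₁0)
          (hgm.indicator ((sigmaGen_mono Finset.inter_subset_left :
            sigmaGen X (A ∩ B) ≤ sigmaGen X A) t₁ ht₁)) ht₂,
        integral_indicator ht₁0, integral_indicator ht₁0,
        setIntegral_condExp h1 hgint ht₁]
    · intro t htB hC
      have htm0 : MeasurableSet t := hB t htB
      have h1t := integral_add_compl htm0 (integrable_condExp (μ := μ) (f := g) (m := sigmaGen X (A ∩ B)))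
      have h2t := integral_add_compl htm0 hgint
      have htot : ∫ ω, (μ[g|sigmaGen X (A ∩ B)]) ω ∂μ = ∫ ω, g ω ∂μ := integral_condExp h1
      linarith
    · intro f hdisj hmeasB hC
      have hm0' : ∀ i, MeasurableSet (f i) := fun i => hB _ (hmeasB i)
      rw [integral_iUnion hm0' hdisj integrable_condExp.integrableOn,
        integral_iUnion hm0' hdisj hgint.integrableOn]
      exact tsum_congr hC
  refine (ae_eq_condExp_of_forall_setIntegral_eq hB hgint
    (fun s _ _ => integrable_condExp.integrableOn) (fun s hs _ => key s hs) ?_).symm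
  exact (stronglyMeasurable_condExp.mono
    (sigmaGen_mono Finset.inter_subset_right :
      sigmaGen X (A ∩ B) ≤ sigmaGen X B)).aestronglyMeasurable

lemma condexp_condexp_sigmaGen (hX : ∀ i, Measurable (X i))
    (hindep : iIndepFun X μ)
    (A B : Finset (Fin n)) (W : Ω → ℝ) :
    μ[μ[W | sigmaGen X A] | sigmaGen X B] =ᵐ[μ] μ[W | sigmaGen X (A ∩ B)] := by
  haveI : SigmaFinite (μ.trim (sigmaGen_le hX A)) := inferInstance
  exact (condexp_sigmaGen_of_stronglyMeasurable hX hindep integrable_condExp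
    stronglyMeasurable_condExp).trans
    (condExp_condExp_of_le (sigmaGen_mono Finset.inter_subset_left) (sigmaGen_le hX A))


lemma stronglyMeasurable_hoeff (W : Ω → ℝ) (J : Finset (Fin n)) :
    StronglyMeasurable[sigmaGen X J] (hoeff μ X W J) :=
  Finset.stronglyMeasurable_sum _ fun L hL =>
    (stronglyMeasurable_condExp.mono (sigmaGen_mono (Finset.mem_powerset.1 hL))).const_smul _

lemma integrable_hoeff (W : Ω → ℝ) (J : Finset (Fin n)) : Integrable (hoeff μ X W J) μ :=
  integrable_finset_sum' _ fun L _ => integrable_condExp.smul _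

/-- If `i ∈ J` and `i ∉ M`, then `E[W_J | 𝓕_M] = 0`. -/
lemma condexp_hoeff_eq_zero (hX : ∀ i, Measurable (X i))
    (hindep : iIndepFun X μ)
    {W : Ω → ℝ} {J M : Finset (Fin n)} {i : Fin n} (hiJ : i ∈ J) (hiM : i ∉ M) :
    μ[hoeff μ X W J | sigmaGen X M] =ᵐ[μ] 0 := by
  have h1 : μ[hoeff μ X W J | sigmaGen X M] =ᵐ[μ]
      ∑ L ∈ J.powerset, μ[((-1 : ℝ) ^ (J.card - L.card)) • μ[W | sigmaGen X L] | sigmaGen X M] :=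
    condExp_finsetSum (fun L _ => integrable_condExp.smul _) _
  have h2 : ∀ L ∈ J.powerset,
      μ[((-1 : ℝ) ^ (J.card - L.card)) • μ[W | sigmaGen X L] | sigmaGen X M] =ᵐ[μ]
        ((-1 : ℝ) ^ (J.card - L.card)) • μ[W | sigmaGen X (L ∩ M)] := fun L _ =>
    (condExp_smul _ _ _).trans
      ((condexp_condexp_sigmaGen hX hindep L M W).fun_comp fun x =>
        ((-1 : ℝ) ^ (J.card - L.card)) * x)
  have h2' : ∀ᵐ ω ∂μ, ∀ L ∈ J.powerset,
      (μ[((-1 : ℝ) ^ (J.card - L.card)) • μ[W | sigmaGen X L] | sigmaGen X M]) ω =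
        (((-1 : ℝ) ^ (J.card - L.card)) • μ[W | sigmaGen X (L ∩ M)]) ω :=
    (Filter.eventually_all_finset _).2 h2
  have hsum0 : (∑ L ∈ J.powerset,
      ((-1 : ℝ) ^ (J.card - L.card)) • μ[W | sigmaGen X (L ∩ M)]) = (0 : Ω → ℝ) := by
    rw [← Finset.insert_erase hiJ, Finset.sum_powerset_insert (Finset.notMem_erase i J),
      ← Finset.sum_add_distrib]
    refine Finset.sum_eq_zero fun L hL => ?_
    have hiL : i ∉ L := fun h => Finset.notMem_erase i J ((Finset.mem_powerset.1 hL) h)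
    have hins : insert i L ∩ M = L ∩ M := Finset.insert_inter_of_notMem hiM
    have hcard : (insert i L).card = L.card + 1 := Finset.card_insert_of_notMem hiL
    have hsub : insert i L ⊆ insert i (J.erase i) :=
      Finset.insert_subset_insert _ (Finset.mem_powerset.1 hL)
    have hle : L.card + 1 ≤ (insert i (J.erase i)).card := by
      rw [← hcard]; exact Finset.card_le_card hsub
    have hexp : (insert i (J.erase i)).card - L.card
        = ((insert i (J.erase i)).card - (insert i L).card) + 1 := by
      rw [hcard]; omega
    rw [hins, hexp, pow_succ, mul_neg_one, neg_smul]
    exact neg_add_cancel _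
  have h3 : (∑ L ∈ J.powerset,
        μ[((-1 : ℝ) ^ (J.card - L.card)) • μ[W | sigmaGen X L] | sigmaGen X M]) =ᵐ[μ]
      (∑ L ∈ J.powerset, ((-1 : ℝ) ^ (J.card - L.card)) • μ[W | sigmaGen X (L ∩ M)]) := by
    filter_upwards [h2'] with ω hω
    rw [Finset.sum_apply, Finset.sum_apply]
    exact Finset.sum_congr rfl hω
  rw [hsum0] at h3
  exact h1.trans h3



lemma core (hX : ∀ i, Measurable (X i)) (hindep : iIndepFun X μ)
    (W V : Ω → ℝ) {J K L : Finset (Fin n)} {i : Fin n}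
    (hiJ : i ∈ J) (hiK : i ∉ K) (hiL : i ∉ L) :
    μ[(fun ω => hoeff μ X W J ω * hoeff μ X V K ω) | sigmaGen X L] =ᵐ[μ] 0 := by
  by_cases hint : Integrable (fun ω => hoeff μ X W J ω * hoeff μ X V K ω) μ
  swap
  · rw [condExp_of_not_integrable hint]
  have hmul : (fun ω => hoeff μ X W J ω * hoeff μ X V K ω)
      = hoeff μ X V K * hoeff μ X W J := funext fun ω => mul_comm _ _
  have hiM : i ∉ ({i}ᶜ : Finset (Fin n)) := by simp
  have hLM : L ⊆ ({i}ᶜ : Finset (Fin n)) := fun j hj => by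
    simp only [Finset.mem_compl, Finset.mem_singleton]
    rintro rfl; exact hiL hj
  have hKM : K ⊆ ({i}ᶜ : Finset (Fin n)) := fun j hj => by
    simp only [Finset.mem_compl, Finset.mem_singleton]
    rintro rfl; exact hiK hj
  have step1 : μ[(fun ω => hoeff μ X W J ω * hoeff μ X V K ω) |
      sigmaGen X ({i}ᶜ : Finset (Fin n))] =ᵐ[μ] 0 := by
    rw [hmul] at hint ⊢
    refine (condExp_mul_of_stronglyMeasurable_left
      ((stronglyMeasurable_hoeff V K).mono (sigmaGen_mono hKM)) hint
      (integrable_hoeff W J)).trans ?_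
    filter_upwards [condexp_hoeff_eq_zero hX hindep hiJ hiM] with ω hω
    simp only [Pi.mul_apply, Pi.zero_apply] at hω ⊢
    rw [hω, mul_zero]
  calc μ[(fun ω => hoeff μ X W J ω * hoeff μ X V K ω) | sigmaGen X L]
      =ᵐ[μ] μ[μ[(fun ω => hoeff μ X W J ω * hoeff μ X V K ω) |
          sigmaGen X ({i}ᶜ : Finset (Fin n))] | sigmaGen X L] :=
        (condExp_condExp_of_le (sigmaGen_mono hLM) (sigmaGen_le hX _)).symm
    _ =ᵐ[μ] μ[(0 : Ω → ℝ) | sigmaGen X L] := condExp_congr_ae step1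
    _ =ᵐ[μ] 0 := by rw [condExp_zero]

end HoeffAux

theorem condexp_product_hoeffding_eq_zero
    {Ω : Type*} [m0 : MeasurableSpace Ω] (μ : Measure Ω) [IsProbabilityMeasure μ]
    {n : ℕ} {E : Fin n → Type*} [∀ i, MeasurableSpace (E i)]
    (X : ∀ i, Ω → E i) (hX : ∀ i, Measurable (X i))
    (hindep : iIndepFun X μ)
    (p q : ℕ) (hp : 1 ≤ p) (hpn : p ≤ n) (hq : 1 ≤ q) (hqn : q ≤ n)
    (W V : Ω → ℝ) (hW2 : MemLp W 2 μ) (hV2 : MemLp V 2 μ)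
    (hWdeg : IsDegenUStat μ X W p) (hVdeg : IsDegenUStat μ X V q)
    (J K : Finset (Fin n)) (hJ : J ∈ DD n p) (hK : K ∈ DD n q)
    (L : Finset (Fin n)) (hL : ¬ ((J \ K) ∪ (K \ J)) ⊆ L) :
    μ[(fun ω => hoeff μ X W J ω * hoeff μ X V K ω) | sigmaGen X L] =ᵐ[μ] 0 := by
  obtain ⟨i, hi, hiL⟩ := Finset.not_subset.1 hL
  rcases Finset.mem_union.1 hi with h | h
  · exact HoeffAux.core hX hindep W V (Finset.mem_sdiff.1 h).1 (Finset.mem_sdiff.1 h).2 hiL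
  · have heq : (fun ω => hoeff μ X W J ω * hoeff μ X V K ω)
        = fun ω => hoeff μ X V K ω * hoeff μ X W J ω := funext fun ω => mul_comm _ _
    rw [heq]
    exact HoeffAux.core hX hindep V W (Finset.mem_sdiff.1 h).1 (Finset.mem_sdiff.1 h).2 hiL
end
end
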